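/- Adding one letter to a string of length at most m-1 increases the unnormalized zero-order empirical entropy by at most log m + β for some absolute constant β: if w' is obtained from w (with |w| ≤ m - 1) by inserting one letter, then |w'|·H₀(w') ≤ |w|·H₀(w) + log m + β. -/

import Mathlib

open Finset

/-- Unnormalized zero-order empirical entropy `|w| * H₀(w)` (logs base 2). -/
noncomputable def nH0 {α : Type*} [DecidableEq α] (w : List α) : ℝ :=
  -∑ a ∈ w.toFinset, (w.count a : ℝ) * Real.logb 2 ((w.count a : ℝ) / (w.length : ℝ))

lemma nH0_eq {α : Type*} [DecidableEq α] (w : List α) :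
    nH0 w = (w.length : ℝ) * Real.logb 2 (w.length : ℝ)
      - ∑ a ∈ w.toFinset, (w.count a : ℝ) * Real.logb 2 ((w.count a : ℝ)) := by
  rcases eq_or_ne w [] with rfl | hw
  · simp [nH0]
  · have hn : (0:ℝ) < (w.length : ℝ) := by
      exact_mod_cast List.length_pos_iff.mpr hw
    unfold nH0
    have hcongr : ∀ a ∈ w.toFinset,
        (w.count a : ℝ) * Real.logb 2 ((w.count a : ℝ) / (w.length : ℝ))
        = (w.count a : ℝ) * Real.logb 2 (w.count a : ℝ)
          - (w.count a : ℝ) * Real.logb 2 (w.length : ℝ) := by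
      intro a ha
      have hc : (0:ℝ) < (w.count a : ℝ) := by
        exact_mod_cast List.count_pos_iff.mpr (List.mem_toFinset.mp ha)
      rw [Real.logb_div (ne_of_gt hc) (ne_of_gt hn), mul_sub]
    rw [Finset.sum_congr rfl hcongr, Finset.sum_sub_distrib, ← Finset.sum_mul]
    have hsum : ∑ a ∈ w.toFinset, (w.count a : ℝ) = (w.length : ℝ) := by
      rw [← Nat.cast_sum]
      have h2 : ∑ a ∈ w.toFinset, w.count a = w.length := by
        simpa using Multiset.toFinset_sum_count_eq (↑w : Multiset α)
      exact_mod_cast h2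
    rw [hsum]; ring

lemma xlogx_mono (k : ℕ) :
    (k : ℝ) * Real.logb 2 (k : ℝ) ≤ ((k:ℝ) + 1) * Real.logb 2 ((k:ℝ) + 1) := by
  rcases Nat.eq_zero_or_pos k with h | h
  · subst h; simp
  · have h1 : (1:ℝ) ≤ (k:ℝ) := by exact_mod_cast h
    have hle : Real.logb 2 (k:ℝ) ≤ Real.logb 2 ((k:ℝ)+1) :=
      Real.logb_le_logb_of_le (by norm_num) (by linarith) (by linarith)
    have hnn : 0 ≤ Real.logb 2 ((k:ℝ)+1) := Real.logb_nonneg (by norm_num) (by linarith)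
    nlinarith

lemma logb_nat_nonneg (m : ℕ) : 0 ≤ Real.logb 2 (m : ℝ) := by
  rcases Nat.eq_zero_or_pos m with h | h
  · subst h; simp
  · exact Real.logb_nonneg (by norm_num) (by exact_mod_cast h)

lemma upper_bound (n m : ℕ) (h : n ≤ m - 1) :
    ((n:ℝ) + 1) * Real.logb 2 ((n:ℝ) + 1) - (n:ℝ) * Real.logb 2 (n:ℝ)
      ≤ Real.logb 2 (m : ℝ) + 2 := by
  rcases Nat.eq_zero_or_pos n with hn | hn
  · subst hn
    simp only [Nat.cast_zero, zero_add, mul_zero, zero_mul, sub_zero]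
    rw [Real.logb_one]
    have := logb_nat_nonneg m
    nlinarith [logb_nat_nonneg m]
  · have hm : n + 1 ≤ m := by omega
    have hn1 : (1:ℝ) ≤ (n:ℝ) := by exact_mod_cast hn
    have hlog2 : (0.6931471803 : ℝ) < Real.log 2 := Real.log_two_gt_d9
    -- logb (n+1) ≤ logb m
    have h1 : Real.logb 2 ((n:ℝ)+1) ≤ Real.logb 2 (m:ℝ) := by
      have : ((n+1 : ℕ):ℝ) ≤ (m:ℝ) := by exact_mod_cast hm
      push_cast at this
      exact Real.logb_le_logb_of_le (by norm_num) (by linarith) this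
    -- n * (logb(n+1) - logb n) ≤ 2
    have h2 : (n:ℝ) * (Real.logb 2 ((n:ℝ)+1) - Real.logb 2 (n:ℝ)) ≤ 2 := by
      have hd : Real.logb 2 ((n:ℝ)+1) - Real.logb 2 (n:ℝ)
          = Real.log (((n:ℝ)+1) / (n:ℝ)) / Real.log 2 := by
        rw [Real.log_div (by linarith) (by linarith)]
        simp [Real.logb, sub_div]
      have hx : (0:ℝ) < ((n:ℝ)+1) / (n:ℝ) := by positivity
      have hlog : Real.log (((n:ℝ)+1) / (n:ℝ)) ≤ ((n:ℝ)+1)/(n:ℝ) - 1 :=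
        Real.log_le_sub_one_of_pos hx
      have heq : ((n:ℝ)+1)/(n:ℝ) - 1 = 1 / (n:ℝ) := by
        field_simp
        ring
      rw [hd]
      rw [heq] at hlog
      have hlog2' : (0:ℝ) < Real.log 2 := by linarith
      calc (n:ℝ) * (Real.log (((n:ℝ)+1) / (n:ℝ)) / Real.log 2)
          ≤ (n:ℝ) * ((1/(n:ℝ)) / Real.log 2) := by
            gcongr
        _ = 1 / Real.log 2 := by field_simp
        _ ≤ 2 := by rw [div_le_iff₀ hlog2']; linarith
    nlinarith [h1, h2]

theorem stmt9 :
    ∃ β : ℝ, ∀ (α : Type) [DecidableEq α] (m : ℕ) (w w' : List α),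
      w.length ≤ m - 1 →
      (∃ (u v : List α) (a : α), w = u ++ v ∧ w' = u ++ [a] ++ v) →
      nH0 w' ≤ nH0 w + Real.logb 2 (m : ℝ) + β := by
  refine ⟨2, ?_⟩
  intro α _ m w w' hlen ⟨u, v, c, hw, hw'⟩
  have hlen' : w'.length = w.length + 1 := by
    subst hw hw'; simp; omega
  have hcount : ∀ a, w'.count a = w.count a + if a = c then 1 else 0 := by
    intro a
    subst hw hw'
    by_cases h : a = c
    · simp [h, List.count_append]; omega
    · simp [h, List.count_append, List.count_cons, Ne.symm h]
  have htf : w'.toFinset = insert c w.toFinset := by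
    subst hw hw'
    ext x; simp
  set n := w.length with hn
  set k := w.count c with hk
  set S := w.toFinset with hS
  -- sum for w'
  have hcc : w'.count c = k + 1 := by rw [hcount]; simp [hk]
  have hsum' : ∑ a ∈ w'.toFinset, (w'.count a : ℝ) * Real.logb 2 ((w'.count a : ℝ))
      = (∑ a ∈ S.erase c, (w.count a : ℝ) * Real.logb 2 ((w.count a : ℝ)))
        + ((k:ℝ)+1) * Real.logb 2 ((k:ℝ)+1) := by
    rw [htf, ← Finset.sum_erase_add _ _ (Finset.mem_insert_self c S),
        Finset.erase_insert_eq_erase]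
    congr 1
    · apply Finset.sum_congr rfl
      intro a ha
      have hac : a ≠ c := Finset.ne_of_mem_erase ha
      rw [hcount a, if_neg hac]
      simp
    · rw [hcc]; push_cast; ring
  have hsum : ∑ a ∈ S, (w.count a : ℝ) * Real.logb 2 ((w.count a : ℝ))
      = (∑ a ∈ S.erase c, (w.count a : ℝ) * Real.logb 2 ((w.count a : ℝ)))
        + (k:ℝ) * Real.logb 2 (k:ℝ) := by
    by_cases hc : c ∈ S
    · rw [← Finset.sum_erase_add _ _ hc]
    · rw [Finset.erase_eq_of_notMem hc]
      have : k = 0 := by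
        rw [hk]; exact List.count_eq_zero_of_not_mem (fun h => hc (List.mem_toFinset.mpr h))
      rw [this]; simp
  rw [nH0_eq, nH0_eq, hsum', hlen', hsum]
  push_cast
  have hmono := xlogx_mono k
  have hupper := upper_bound n m hlen
  linarith
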